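/- arXiv:2403.11231 — 3 statements merged into one kernel-verified Lean document; each statement's English description precedes it below -/
import Mathlib

section
/- The complete homogeneous symmetric polynomial $\sum_{m}(X_1,\dots,X_{d+1}) = \sum_{a_1+\cdots+a_{d+1}=m} X_1^{a_1}\cdots X_{d+1}^{a_{d+1}}$ is an irreducible polynomial in $k[X_1,\dots,X_{d+1}]$ over an algebraically closed field $k$ of characteristic zero, provided $d+1 \ge 3$ and $m \ge 1$. -/
open MvPolynomial Finset

noncomputable def completeHomogeneous (k : Type*) [CommRing k] (n m : ℕ) :
    MvPolynomial (Fin n) k :=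
  ∑ a ∈ Finset.Nat.antidiagonalTuple n m, ∏ i, X i ^ a i

namespace CHaux


/-- Finsupp version of `antidiagonalTuple`. -/
noncomputable def T (n m : ℕ) : Finset (Fin n →₀ ℕ) :=
  (Finset.Nat.antidiagonalTuple n m).map
    ⟨Finsupp.equivFunOnFinite.symm, Finsupp.equivFunOnFinite.symm.injective⟩

lemma mem_T {n m : ℕ} {d : Fin n →₀ ℕ} : d ∈ T n m ↔ ∑ i, d i = m := by
  constructor
  · rintro hd
    obtain ⟨a, ha, rfl⟩ := Finset.mem_map.mp hd
    simp only [Function.Embedding.coeFn_mk]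
    rw [Finset.Nat.mem_antidiagonalTuple] at ha
    simpa using ha
  · intro h
    refine Finset.mem_map.mpr ⟨d, ?_, by simp⟩
    rw [Finset.Nat.mem_antidiagonalTuple]
    simpa using h

lemma degree_eq_sum_univ {n : ℕ} (d : Fin n →₀ ℕ) : d.degree = ∑ i, d i := by
  rw [Finsupp.degree]
  exact Finset.sum_subset (Finset.subset_univ _) (by
    intro x _ hx
    simpa using Finsupp.notMem_support_iff.mp hx)

lemma mem_T' {n m : ℕ} {d : Fin n →₀ ℕ} : d ∈ T n m ↔ d.degree = m := by
  rw [mem_T, degree_eq_sum_univ]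

lemma CH_eq {k : Type*} [CommRing k] (n m : ℕ) :
    completeHomogeneous k n m = ∑ d ∈ T n m, monomial d 1 := by
  rw [completeHomogeneous, T, Finset.sum_map]
  refine Finset.sum_congr rfl fun a _ => ?_
  rw [← prod_X_pow_eq_monomial]
  have hcoe : ∀ x, (Finsupp.equivFunOnFinite.symm a) x = a x := fun _ => rfl
  have : (∏ i, (X i ^ a i : MvPolynomial (Fin n) k)) =
      ∏ i, (X i ^ (Finsupp.equivFunOnFinite.symm a) i : MvPolynomial (Fin n) k) := by
    simp [hcoe]
  rw [this]
  refine (Finset.prod_subset (Finset.subset_univ _) ?_).symm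
  intro x _ hx
  have h0 : (Finsupp.equivFunOnFinite.symm a) x = 0 := Finsupp.notMem_support_iff.mp hx
  simp [h0]

lemma CH_isHomogeneous {k : Type*} [CommRing k] (n m : ℕ) :
    (completeHomogeneous k n m).IsHomogeneous m := by
  rw [CH_eq]
  exact IsHomogeneous.sum _ _ _ fun d hd => isHomogeneous_monomial _ (mem_T'.mp hd)

lemma T_zero (n : ℕ) : T n 0 = {0} := by
  ext d
  simp only [mem_T, Finset.mem_singleton]
  constructor
  · intro h
    ext i
    exact Finset.sum_eq_zero_iff.mp h i (Finset.mem_univ i)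
  · rintro rfl; simp

lemma CH_zero {k : Type*} [CommRing k] (n : ℕ) : completeHomogeneous k n 0 = 1 := by
  rw [CH_eq, T_zero]
  simp



variable {k : Type*} [CommRing k]

lemma sum_single_one {n : ℕ} (i : Fin n) : (∑ j, Finsupp.single i 1 j) = 1 := by
  simp [Finsupp.single_apply]

lemma key_bij {n r : ℕ} (i : Fin n) {A : Type*} [AddCommMonoid A]
    (G : (Fin n →₀ ℕ) → ℕ → A) (hG : ∀ d, G d 0 = 0) :
    ∑ d ∈ T n (r+1), G d (d i) = ∑ c ∈ T n r, G (c + Finsupp.single i 1) (c i + 1) := by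
  rw [← Finset.sum_filter_of_ne (p := fun d => d i ≠ 0)
    (fun d _ hfd => by intro h0; exact hfd (by rw [h0, hG]))]
  refine Finset.sum_bij' (fun d _ => d - Finsupp.single i 1)
    (fun c _ => c + Finsupp.single i 1) ?_ ?_ ?_ ?_ ?_
  · intro d hd
    simp only [Finset.mem_filter] at hd
    obtain ⟨hd1, hd2⟩ := hd
    have hle : Finsupp.single i 1 ≤ d := Finsupp.single_le_iff.mpr (Nat.one_le_iff_ne_zero.mpr hd2)
    have hcan : (d - Finsupp.single i 1) + Finsupp.single i 1 = d := tsub_add_cancel_of_le hle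
    rw [mem_T]
    have := mem_T.mp hd1
    have hsum : (∑ j, (((d - Finsupp.single i 1) + Finsupp.single i 1 : Fin n →₀ ℕ)) j) = r + 1 := by
      rw [hcan]; exact this
    simp_rw [Finsupp.add_apply, Finset.sum_add_distrib, sum_single_one] at hsum
    omega
  · intro c hc
    rw [Finset.mem_filter]
    constructor
    · rw [mem_T]
      simp_rw [Finsupp.add_apply, Finset.sum_add_distrib, sum_single_one]
      rw [mem_T.mp hc]
    · simp [Finsupp.add_apply, Finsupp.single_apply]
  · intro d hd
    simp only [Finset.mem_filter] at hd
    exact tsub_add_cancel_of_le (Finsupp.single_le_iff.mpr (Nat.one_le_iff_ne_zero.mpr hd.2))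
  · intro c _
    ext j
    simp only [Finsupp.tsub_apply, Finsupp.add_apply]
    omega
  · intro d hd
    simp only [Finset.mem_filter] at hd
    have hle : Finsupp.single i 1 ≤ d := Finsupp.single_le_iff.mpr (Nat.one_le_iff_ne_zero.mpr hd.2)
    have hcan : (d - Finsupp.single i 1) + Finsupp.single i 1 = d := tsub_add_cancel_of_le hle
    have happ : ((d - Finsupp.single i 1 : Fin n →₀ ℕ)) i + 1 = d i := by
      have h2 := congrArg (fun f : Fin n →₀ ℕ => f i) hcan
      simpa [Finsupp.add_apply, Finsupp.single_apply] using h2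
    rw [hcan, happ]

/-- The "doubled variable" polynomial: `∑_{|c| = r} (cᵢ+1) X^c`; equals `∂ᵢ h_{r+1}`. -/
noncomputable def Pder (k : Type*) [CommRing k] (n : ℕ) (i : Fin n) (r : ℕ) :
    MvPolynomial (Fin n) k :=
  ∑ c ∈ T n r, monomial c ((c i + 1 : ℕ) : k)

lemma Pder_zero {n : ℕ} (i : Fin n) : Pder k n i 0 = 1 := by
  rw [Pder, T_zero]
  simp

lemma pderiv_CH {n r : ℕ} (i : Fin n) :
    pderiv i (completeHomogeneous k n (r+1)) = Pder k n i r := by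
  rw [CH_eq, map_sum]
  have h1 : ∀ d : Fin n →₀ ℕ, pderiv i (monomial d (1:k)) =
      monomial (d - Finsupp.single i 1) ((d i : ℕ) : k) := by
    intro d; rw [pderiv_monomial]; simp
  simp_rw [h1]
  rw [key_bij i (fun d t => monomial (d - Finsupp.single i 1) ((t : ℕ) : k)) (by simp)]
  refine Finset.sum_congr rfl fun c _ => ?_
  rw [add_tsub_cancel_right]

lemma X_mul_Pder {n r : ℕ} (i : Fin n) :
    X i * Pder k n i r = ∑ d ∈ T n (r+1), monomial d ((d i : ℕ) : k) := by
  rw [key_bij i (fun d t => monomial d ((t : ℕ) : k)) (by simp), Pder, Finset.mul_sum]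
  refine Finset.sum_congr rfl fun c _ => ?_
  rw [X, monomial_mul]
  simp [add_comm]

lemma Pder_succ {n r : ℕ} (i : Fin n) :
    Pder k n i (r+1) = X i * Pder k n i r + completeHomogeneous k n (r+1) := by
  rw [X_mul_Pder, CH_eq, ← Finset.sum_add_distrib, Pder]
  refine Finset.sum_congr rfl fun d _ => ?_
  rw [← map_add]
  push_cast
  ring_nf

lemma euler {n r : ℕ} :
    ∑ i, X i * Pder k n i r = (r+1 : ℕ) • completeHomogeneous k n (r+1) := by
  simp_rw [X_mul_Pder]
  rw [Finset.sum_comm, CH_eq, Finset.smul_sum]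
  refine Finset.sum_congr rfl fun d hd => ?_
  rw [← map_sum]
  have : (∑ i, ((d i : ℕ) : k)) = ((r+1 : ℕ) : k) := by
    rw [← Nat.cast_sum, mem_T.mp hd]
  rw [this]
  simp [MvPolynomial.smul_monomial]


lemma smooth {k : Type*} [Field k] [CharZero k] {n : ℕ} :
    ∀ (r : ℕ) (x : Fin n → k), (∀ i, x i ≠ 0 → eval x (Pder k n i r) = 0) → ∀ i, x i = 0 := by
  intro r
  classical
  induction r with
  | zero =>
    intro x hx i
    by_contra h
    have := hx i h
    rw [Pder_zero] at this
    simp at this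
  | succ r ih =>
    intro x hx i
    by_contra hxi
    set hv := eval x (completeHomogeneous k n (r+1)) with hhv
    set s := Finset.univ.filter (fun j : Fin n => x j ≠ 0) with hs
    have hmem : ∀ j, j ∈ s ↔ x j ≠ 0 := by intro j; simp [hs]
    have hsne : i ∈ s := (hmem i).mpr hxi
    have hexp : ∀ j, eval x (Pder k n j (r+1)) =
        x j * eval x (Pder k n j r) + hv := by
      intro j
      rw [Pder_succ, map_add, map_mul, eval_X, hhv]
    have heuler : ∑ j, x j * eval x (Pder k n j r) = ((r+1 : ℕ) : k) * hv := by
      have h1 := congrArg (eval x) (euler (k := k) (n := n) (r := r))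
      rw [map_sum, map_nsmul] at h1
      simp only [map_mul, eval_X] at h1
      rw [h1, hhv, nsmul_eq_mul]
    have hpart : ∑ j ∈ s, x j * eval x (Pder k n j r)
        = ∑ j, x j * eval x (Pder k n j r) := by
      refine Finset.sum_subset (Finset.subset_univ s) ?_
      intro j _ hj
      have : x j = 0 := by
        by_contra h; exact hj ((hmem j).mpr h)
      rw [this, zero_mul]
    have hsum0 : ∑ j ∈ s, eval x (Pder k n j (r+1)) = 0 :=
      Finset.sum_eq_zero fun j hj => hx j ((hmem j).mp hj)
    have hkey : (((r+1) + s.card : ℕ) : k) * hv = 0 := by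
      have : ∑ j ∈ s, eval x (Pder k n j (r+1))
          = ∑ j ∈ s, x j * eval x (Pder k n j r) + (s.card : k) * hv := by
        simp_rw [hexp, Finset.sum_add_distrib, Finset.sum_const, nsmul_eq_mul]
      rw [hsum0, hpart, heuler] at this
      push_cast at this ⊢
      linear_combination -this
    have hcast : (((r+1) + s.card : ℕ) : k) ≠ 0 := by
      rw [Nat.cast_ne_zero]
      omega
    have hv0 : hv = 0 := by
      rcases mul_eq_zero.mp hkey with h | h
      · exact absurd h hcast
      · exact h
    have hx' : ∀ j, x j ≠ 0 → eval x (Pder k n j r) = 0 := by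
      intro j hj
      have h0 := hx j hj
      rw [hexp j, hv0, add_zero] at h0
      rcases mul_eq_zero.mp h0 with h | h
      · exact absurd h hj
      · exact h
    exact hxi (ih x hx' i)


section GM
variable {k : Type*} [CommRing k] {n : ℕ}



lemma degree_add' (u v : Fin n →₀ ℕ) : (u + v).degree = u.degree + v.degree := by
  simp_rw [degree_eq_sum_univ, Finsupp.add_apply, Finset.sum_add_distrib]

lemma homogeneousComponent_mul' (P Q : MvPolynomial (Fin n) k) (e : ℕ) :
    homogeneousComponent e (P * Q) =
      ∑ p ∈ Finset.HasAntidiagonal.antidiagonal e, homogeneousComponent p.1 P * homogeneousComponent p.2 Q := by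
  classical
  ext d
  rw [coeff_homogeneousComponent, coeff_sum]
  simp_rw [coeff_mul, coeff_homogeneousComponent]
  rw [Finset.sum_comm]
  by_cases hd : d.degree = e
  · rw [if_pos hd]
    refine Finset.sum_congr rfl fun uv huv => ?_
    have huv' : uv.1 + uv.2 = d := Finset.HasAntidiagonal.mem_antidiagonal.mp huv
    have hdeg : uv.1.degree + uv.2.degree = e := by
      rw [← hd, ← huv', degree_add']
    rw [Finset.sum_eq_single (uv.1.degree, uv.2.degree)]
    · simp
    · intro b hb hne
      by_cases h1 : uv.1.degree = b.1
      · have h2 : ¬ uv.2.degree = b.2 := by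
          intro h2
          exact hne (by rw [Prod.ext_iff]; exact ⟨h1.symm, h2.symm⟩)
        rw [if_neg h2, mul_zero]
      · rw [if_neg h1, zero_mul]
    · intro hnm
      exact absurd (Finset.HasAntidiagonal.mem_antidiagonal.mpr hdeg) hnm
  · rw [if_neg hd]
    refine (Finset.sum_eq_zero fun uv huv => Finset.sum_eq_zero fun ij hij => ?_).symm
    have huv' : uv.1 + uv.2 = d := Finset.HasAntidiagonal.mem_antidiagonal.mp huv
    have hij' : ij.1 + ij.2 = e := Finset.HasAntidiagonal.mem_antidiagonal.mp hij
    by_cases h1 : uv.1.degree = ij.1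
    · by_cases h2 : uv.2.degree = ij.2
      · exfalso
        apply hd
        rw [← huv', degree_add', h1, h2, hij']
      · rw [if_neg h2, mul_zero]
    · rw [if_neg h1, zero_mul]

lemma homogeneousComponent_mul_homogeneous {F : MvPolynomial (Fin n) k} {a : ℕ}
    (hF : F.IsHomogeneous a) (u : MvPolynomial (Fin n) k) (c : ℕ) :
    homogeneousComponent (c + a) (u * F) = homogeneousComponent c u * F := by
  rw [homogeneousComponent_mul']
  rw [Finset.sum_eq_single (c, a)]
  · rw [homogeneousComponent_of_mem (mem_homogeneousSubmodule _ _ |>.mpr hF), if_pos rfl]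
  · intro b hb hne
    have hb' : b.1 + b.2 = c + a := Finset.HasAntidiagonal.mem_antidiagonal.mp hb
    rw [homogeneousComponent_of_mem (mem_homogeneousSubmodule _ _ |>.mpr hF)]
    have h2 : ¬ b.2 = a := by
      intro h2
      exact hne (by rw [Prod.ext_iff]; constructor <;> omega)
    rw [if_neg h2, mul_zero]
  · intro hnm
    exact absurd (Finset.HasAntidiagonal.mem_antidiagonal (a := (c, a)).mpr rfl) hnm

lemma isHomogeneous_of_degree_mem {P : MvPolynomial (Fin n) k} {a : ℕ}
    (h : ∀ d ∈ P.support, Finsupp.degree d = a) : P.IsHomogeneous a := by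
  intro d hd
  rw [Pi.one_def, ← Finsupp.degree_eq_weight_one]
  exact h d (MvPolynomial.mem_support_iff.mpr hd)

lemma isHomogeneous_of_mul [IsDomain k] {P Q : MvPolynomial (Fin n) k} {m : ℕ}
    (hP : P ≠ 0) (hQ : Q ≠ 0) (h : (P * Q).IsHomogeneous m) :
    ∃ a b : ℕ, a + b = m ∧ P.IsHomogeneous a ∧ Q.IsHomogeneous b := by
  classical
  have hsuppP : (P.support.image Finsupp.degree).Nonempty :=
    (Finset.image_nonempty).mpr (MvPolynomial.support_nonempty.mpr hP)
  have hsuppQ : (Q.support.image Finsupp.degree).Nonempty :=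
    (Finset.image_nonempty).mpr (MvPolynomial.support_nonempty.mpr hQ)
  set p0 := (P.support.image Finsupp.degree).min' hsuppP with hp0
  set p1 := (P.support.image Finsupp.degree).max' hsuppP with hp1
  set q0 := (Q.support.image Finsupp.degree).min' hsuppQ with hq0
  set q1 := (Q.support.image Finsupp.degree).max' hsuppQ with hq1
  have hcompP : ∀ c ∈ P.support.image Finsupp.degree, homogeneousComponent c P ≠ 0 := by
    intro c hc
    obtain ⟨d, hd, rfl⟩ := Finset.mem_image.mp hc
    intro h0
    have := coeff_homogeneousComponent (d.degree) P d
    rw [h0, if_pos rfl] at this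
    exact MvPolynomial.mem_support_iff.mp hd this.symm
  have hcompQ : ∀ c ∈ Q.support.image Finsupp.degree, homogeneousComponent c Q ≠ 0 := by
    intro c hc
    obtain ⟨d, hd, rfl⟩ := Finset.mem_image.mp hc
    intro h0
    have := coeff_homogeneousComponent (d.degree) Q d
    rw [h0, if_pos rfl] at this
    exact MvPolynomial.mem_support_iff.mp hd this.symm
  have hPzero : ∀ c, c ∉ P.support.image Finsupp.degree → homogeneousComponent c P = 0 := by
    intro c hc
    refine homogeneousComponent_eq_zero' _ _ fun d hd hdc => ?_
    exact hc (Finset.mem_image.mpr ⟨d, hd, hdc⟩)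
  have hQzero : ∀ c, c ∉ Q.support.image Finsupp.degree → homogeneousComponent c Q = 0 := by
    intro c hc
    refine homogeneousComponent_eq_zero' _ _ fun d hd hdc => ?_
    exact hc (Finset.mem_image.mpr ⟨d, hd, hdc⟩)
  have key : ∀ pc qc : ℕ, pc ∈ P.support.image Finsupp.degree →
      qc ∈ Q.support.image Finsupp.degree →
      (∀ b1 b2 : ℕ, b1 + b2 = pc + qc → (b1, b2) ≠ (pc, qc) →
        homogeneousComponent b1 P = 0 ∨ homogeneousComponent b2 Q = 0) →
      pc + qc = m := by
    intro pc qc hpc hqc hside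
    have hcomp_eq : homogeneousComponent (pc + qc) (P * Q) =
        homogeneousComponent pc P * homogeneousComponent qc Q := by
      rw [homogeneousComponent_mul']
      rw [Finset.sum_eq_single (pc, qc)]
      · intro b hb hne
        rcases hside b.1 b.2 (Finset.HasAntidiagonal.mem_antidiagonal.mp hb)
            (by simpa [Prod.ext_iff] using hne) with h0 | h0
        · rw [h0, zero_mul]
        · rw [h0, mul_zero]
      · intro hnm
        exact absurd (Finset.HasAntidiagonal.mem_antidiagonal (a := (pc, qc)).mpr rfl) hnm
    have hne0 : homogeneousComponent (pc + qc) (P * Q) ≠ 0 := by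
      rw [hcomp_eq]
      exact mul_ne_zero (hcompP _ hpc) (hcompQ _ hqc)
    by_contra hne
    rw [homogeneousComponent_of_mem (mem_homogeneousSubmodule _ _ |>.mpr h), if_neg hne] at hne0
    exact hne0 rfl
  have hmin : p0 + q0 = m := by
    refine key p0 q0 (Finset.min'_mem _ _) (Finset.min'_mem _ _) ?_
    intro b1 b2 hsum hne
    by_cases hb1 : b1 ∈ P.support.image Finsupp.degree
    · right
      apply hQzero
      intro hb2
      have h1 := Finset.min'_le _ _ hb1
      have h2 := Finset.min'_le _ _ hb2
      rw [← hp0] at h1; rw [← hq0] at h2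
      have : b1 = p0 ∧ b2 = q0 := by omega
      exact hne (by rw [Prod.ext_iff]; exact ⟨this.1, this.2⟩)
    · left; exact hPzero _ hb1
  have hmax : p1 + q1 = m := by
    refine key p1 q1 (Finset.max'_mem _ _) (Finset.max'_mem _ _) ?_
    intro b1 b2 hsum hne
    by_cases hb1 : b1 ∈ P.support.image Finsupp.degree
    · by_cases hb2 : b2 ∈ Q.support.image Finsupp.degree
      · have h1 := Finset.le_max' _ _ hb1
        have h2 := Finset.le_max' _ _ hb2
        rw [← hp1] at h1; rw [← hq1] at h2
        have : b1 = p1 ∧ b2 = q1 := by omega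
        exact absurd (by rw [Prod.ext_iff]; exact ⟨this.1, this.2⟩) hne
      · right; exact hQzero _ hb2
    · left; exact hPzero _ hb1
  have hple : p0 ≤ p1 := Finset.min'_le _ _ (Finset.max'_mem _ _)
  have hqle : q0 ≤ q1 := Finset.min'_le _ _ (Finset.max'_mem _ _)
  have hpp : p0 = p1 := by omega
  refine ⟨p0, q0, hmin, ?_, ?_⟩
  · refine isHomogeneous_of_degree_mem fun d hd => ?_
    have hmem := Finset.mem_image_of_mem Finsupp.degree hd
    have h1 := Finset.min'_le _ _ hmem
    have h2 := Finset.le_max' _ _ hmem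
    rw [← hp0] at h1; rw [← hp1] at h2
    omega
  · refine isHomogeneous_of_degree_mem fun d hd => ?_
    have hmem := Finset.mem_image_of_mem Finsupp.degree hd
    have h1 := Finset.min'_le _ _ hmem
    have h2 := Finset.le_max' _ _ hmem
    rw [← hq0] at h1; rw [← hq1] at h2
    omega

lemma eq_C_of_isHomogeneous_zero {P : MvPolynomial (Fin n) k} (h : P.IsHomogeneous 0) :
    ∃ c : k, P = C c := by
  refine ⟨coeff 0 P, ?_⟩
  ext d
  rw [coeff_C]
  by_cases hd : (0 : Fin n →₀ ℕ) = d
  · rw [if_pos hd, ← hd]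
  · rw [if_neg hd]
    by_contra hc
    have := h hc
    rw [Pi.one_def, ← Finsupp.degree_eq_weight_one, Finsupp.degree_eq_zero_iff] at this
    exact hd this.symm


end GM


lemma choose_lt_choose_of_lt {s m1 m2 : ℕ} (hs : 1 ≤ s) (h1 : s ≤ m1) (h2 : m1 < m2) :
    m1.choose s < m2.choose s := by
  have hstep : m1.choose s < (m1+1).choose s := by
    obtain ⟨u, rfl⟩ : ∃ u, s = u + 1 := ⟨s-1, by omega⟩
    rw [Nat.choose_succ_succ]
    simp only [Nat.succ_eq_add_one]
    have := Nat.choose_pos (show u ≤ m1 by omega)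
    omega
  exact lt_of_lt_of_le hstep (Nat.choose_le_choose s h2)

lemma choose_ineq {v : ℕ} (a b w : ℕ) (ha : 1 ≤ a) (hb : 1 ≤ b) :
    (a + w + (v+2)).choose (v+2) + (b + w + (v+2)).choose (v+2) <
      (a + b + w + (v+2)).choose (v+2) + (w + (v+2)).choose (v+2) := by
  induction a, ha using Nat.le_induction with
  | base =>
    have h1 : (1 + w + (v+2)).choose (v+2)
        = (w + (v+2)).choose (v+1) + (w + (v+2)).choose (v+2) := by
      rw [show 1 + w + (v+2) = (w + (v+2)) + 1 by omega, Nat.choose_succ_succ]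
    have h2 : (1 + b + w + (v+2)).choose (v+2)
        = (b + w + (v+2)).choose (v+1) + (b + w + (v+2)).choose (v+2) := by
      rw [show 1 + b + w + (v+2) = (b + w + (v+2)) + 1 by omega, Nat.choose_succ_succ]
    have h3 : (w + (v+2)).choose (v+1) < (b + w + (v+2)).choose (v+1) :=
      choose_lt_choose_of_lt (by omega) (by omega) (by omega)
    omega
  | succ a ha IH =>
    have h1 : (a + 1 + b + w + (v+2)).choose (v+2)
        = (a + b + w + (v+2)).choose (v+1) + (a + b + w + (v+2)).choose (v+2) := by
      rw [show a + 1 + b + w + (v+2) = (a + b + w + (v+2)) + 1 by omega, Nat.choose_succ_succ]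
    have h2 : (a + 1 + w + (v+2)).choose (v+2)
        = (a + w + (v+2)).choose (v+1) + (a + w + (v+2)).choose (v+2) := by
      rw [show a + 1 + w + (v+2) = (a + w + (v+2)) + 1 by omega, Nat.choose_succ_succ]
    have h3 : (a + w + (v+2)).choose (v+1) ≤ (a + b + w + (v+2)).choose (v+1) :=
      Nat.choose_le_choose _ (by omega)
    omega

section Dim
variable {k : Type*} [Field k] {n : ℕ}



lemma degree_eq_card (d : Fin n →₀ ℕ) : d.degree = Multiset.card (Finsupp.toMultiset d) := by
  rw [Finsupp.card_toMultiset]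
  rfl

noncomputable def symEquiv (n t : ℕ) : {d // d ∈ T n t} ≃ Sym (Fin n) t where
  toFun d := ⟨Finsupp.toMultiset d.1, by rw [← degree_eq_card]; exact mem_T'.mp d.2⟩
  invFun s := ⟨Multiset.toFinsupp s.1, by
    rw [mem_T', degree_eq_card, Multiset.toFinsupp_toMultiset]
    exact s.2⟩
  left_inv d := by
    apply Subtype.ext
    simp
  right_inv s := by
    apply Subtype.ext
    simp

lemma card_T (n t : ℕ) : (T n t).card = (n + t - 1).choose t := by
  classical
  rw [← Fintype.card_coe]
  rw [Fintype.card_congr (symEquiv n t)]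
  rw [Sym.card_sym_eq_choose, Fintype.card_fin]

noncomputable def basisEquiv (t : ℕ) :
    (homogeneousSubmodule (Fin n) k t) ≃ₗ[k] ({d // d ∈ T n t} → k) := by
  classical
  refine LinearEquiv.ofBijective
    { toFun := fun P d => coeff d.1 P.1
      map_add' := fun P Q => by funext d; simp
      map_smul' := fun c P => by funext d; simp } ⟨?_, ?_⟩
  · intro P Q h
    apply Subtype.ext
    apply MvPolynomial.ext
    intro e
    by_cases he : e ∈ T n t
    · exact congrFun h ⟨e, he⟩
    · have h1 : coeff e P.1 = 0 := P.2.coeff_eq_zero (fun hc => he (mem_T'.mpr hc))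
      have h2 : coeff e Q.1 = 0 := Q.2.coeff_eq_zero (fun hc => he (mem_T'.mpr hc))
      rw [h1, h2]
  · intro f
    refine ⟨⟨∑ d ∈ (T n t).attach, monomial d.1 (f d), ?_⟩, ?_⟩
    · refine Submodule.sum_mem _ fun d _ => ?_
      rw [mem_homogeneousSubmodule]
      exact isHomogeneous_monomial _ (mem_T'.mp d.2)
    · funext d
      show coeff d.1 (∑ c ∈ (T n t).attach, monomial c.1 (f c)) = f d
      rw [coeff_sum]
      rw [Finset.sum_eq_single d]
      · rw [coeff_monomial, if_pos rfl]
      · intro c _ hne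
        rw [coeff_monomial, if_neg]
        intro hc
        exact hne (Subtype.ext hc)
      · intro hd
        exact absurd (Finset.mem_attach _ d) hd

instance fdRsub (t : ℕ) : FiniteDimensional k (homogeneousSubmodule (Fin n) k t) :=
  Module.Finite.equiv (basisEquiv t).symm

lemma finrank_Rsub (t : ℕ) :
    Module.finrank k (homogeneousSubmodule (Fin n) k t) = (n + t - 1).choose t := by
  classical
  rw [LinearEquiv.finrank_eq (basisEquiv (k := k) (n := n) t)]
  rw [Module.finrank_pi, Fintype.card_coe, card_T]

end Dim


section CommonZero
variable {k : Type*} [Field k] [IsAlgClosed k] {n : ℕ}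

lemma pow_mem_span {F G : MvPolynomial (Fin n) k}
    (hnz : ¬ ∃ x : Fin n → k, x ≠ 0 ∧ eval x F = 0 ∧ eval x G = 0) (i : Fin n) :
    ∃ N : ℕ, X i ^ N ∈ Ideal.span {F, G} := by
  have hzl : MvPolynomial.zeroLocus k (Ideal.span {F, G}) ⊆ {0} := by
    intro x hx
    have hF : eval x F = 0 := by
      simpa using (mem_zeroLocus_iff.mp hx) F (Ideal.subset_span (by simp))
    have hG : eval x G = 0 := by
      simpa using (mem_zeroLocus_iff.mp hx) G (Ideal.subset_span (by simp))
    by_contra hx0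
    exact hnz ⟨x, fun h0 => hx0 (by rw [h0]; rfl), hF, hG⟩
  have hX : (X i : MvPolynomial (Fin n) k) ∈
      vanishingIdeal k (MvPolynomial.zeroLocus k (Ideal.span {F, G})) := by
    rw [mem_vanishingIdeal_iff]
    intro x hx
    have hx0 : x = 0 := hzl hx
    rw [hx0]
    simp
  rw [vanishingIdeal_zeroLocus_eq_radical] at hX
  exact Ideal.mem_radical_iff.mp hX

lemma monomial_mem_span {F G : MvPolynomial (Fin n) k} {N : ℕ} (hn : 1 ≤ n)
    (hpow : ∀ i : Fin n, X i ^ N ∈ Ideal.span {F, G})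
    {d : Fin n →₀ ℕ} (hd : n * N ≤ d.degree) (c : k) :
    monomial d c ∈ Ideal.span {F, G} := by
  have hex : ∃ i, N ≤ d i := by
    rcases Nat.eq_zero_or_pos N with hN | hN
    · exact ⟨⟨0, by omega⟩, by omega⟩
    by_contra hno
    push_neg at hno
    have hsum : (∑ j : Fin n, d j) ≤ (Finset.univ (α := Fin n)).card • (N - 1) := by
      apply Finset.sum_le_card_nsmul
      intro j _
      have := hno j
      omega
    rw [degree_eq_sum_univ] at hd
    rw [Finset.card_univ, Fintype.card_fin, smul_eq_mul] at hsum
    have hmul : n * (N - 1) + n * 1 = n * ((N - 1) + 1) := (Nat.mul_add n (N-1) 1).symm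
    rw [show (N - 1) + 1 = N by omega] at hmul
    omega
  obtain ⟨i, hi⟩ := hex
  have hsplit : monomial d c = monomial (d - Finsupp.single i N) c * (X i ^ N) := by
    rw [X_pow_eq_monomial, monomial_mul, mul_one,
      tsub_add_cancel_of_le (Finsupp.single_le_iff.mpr hi)]
  rw [hsplit]
  exact Ideal.mul_mem_left _ _ (hpow i)

lemma homog_mem_span {F G : MvPolynomial (Fin n) k} {N : ℕ} (hn : 1 ≤ n)
    (hpow : ∀ i : Fin n, X i ^ N ∈ Ideal.span {F, G})
    {t : ℕ} (ht : n * N ≤ t) {P : MvPolynomial (Fin n) k} (hP : P.IsHomogeneous t) :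
    P ∈ Ideal.span {F, G} := by
  nth_rewrite 1 [as_sum P]
  apply Ideal.sum_mem
  intro d hd
  have hdeg : d.degree = t := by
    have := hP (MvPolynomial.mem_support_iff.mp hd)
    rw [Pi.one_def, ← Finsupp.degree_eq_weight_one] at this
    exact this
  exact monomial_mem_span hn hpow (by omega) _

lemma exists_common_zero (hn : 3 ≤ n) {a b : ℕ} {F G : MvPolynomial (Fin n) k}
    (hF : F.IsHomogeneous a) (hG : G.IsHomogeneous b) (ha : 1 ≤ a) (hb : 1 ≤ b)
    (hG0 : G ≠ 0) :
    ∃ x : Fin n → k, x ≠ 0 ∧ eval x F = 0 ∧ eval x G = 0 := by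
  by_contra hnz
  -- a uniform exponent
  have hpow : ∃ N, ∀ i : Fin n, X i ^ N ∈ Ideal.span {F, G} := by
    choose Nf hNf using pow_mem_span hnz
    refine ⟨Finset.univ.sup Nf, fun i => ?_⟩
    have hle : Nf i ≤ Finset.univ.sup Nf := Finset.le_sup (Finset.mem_univ i)
    have : (X i : MvPolynomial (Fin n) k) ^ Finset.univ.sup Nf
        = X i ^ (Finset.univ.sup Nf - Nf i) * X i ^ Nf i := by
      rw [← pow_add]
      congr 1
      omega
    rw [this]
    exact Ideal.mul_mem_left _ _ (hNf i)
  obtain ⟨N, hpow⟩ := hpow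
  set w := n * N with hw
  set t := a + b + w with hts
  -- the multiplication maps
  let f1 : (homogeneousSubmodule (Fin n) k (b + w)) →ₗ[k] (homogeneousSubmodule (Fin n) k t) :=
    LinearMap.codRestrict _ ((LinearMap.mulRight k F).comp (Submodule.subtype _)) (fun u => by
      rw [mem_homogeneousSubmodule]
      exact (show b + w + a = t by omega) ▸ (u.2.mul hF))
  let f2 : (homogeneousSubmodule (Fin n) k (a + w)) →ₗ[k] (homogeneousSubmodule (Fin n) k t) :=
    LinearMap.codRestrict _ ((LinearMap.mulRight k G).comp (Submodule.subtype _)) (fun u => by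
      rw [mem_homogeneousSubmodule]
      exact (show a + w + b = t by omega) ▸ (u.2.mul hG))
  let mu := f1.coprod f2
  have hsurj : Function.Surjective mu := by
    rintro ⟨P, hP⟩
    have hPmem : P ∈ Ideal.span {F, G} := by
      refine homog_mem_span (by omega) hpow (t := t) (by omega) ?_
      exact (mem_homogeneousSubmodule _ _).mp hP
    obtain ⟨u, v, huv⟩ := Ideal.mem_span_pair.mp hPmem
    refine ⟨(⟨homogeneousComponent (b + w) u, homogeneousComponent_mem _ _⟩,
            ⟨homogeneousComponent (a + w) v, homogeneousComponent_mem _ _⟩), ?_⟩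
    apply Subtype.ext
    show homogeneousComponent (b + w) u * F + homogeneousComponent (a + w) v * G = P
    have h1 : homogeneousComponent ((b + w) + a) (u * F)
        = homogeneousComponent (b + w) u * F := homogeneousComponent_mul_homogeneous hF u (b + w)
    have h2 : homogeneousComponent ((a + w) + b) (v * G)
        = homogeneousComponent (a + w) v * G := homogeneousComponent_mul_homogeneous hG v (a + w)
    rw [show (b + w) + a = t by omega] at h1
    rw [show (a + w) + b = t by omega] at h2
    have h3 : homogeneousComponent t (u * F + v * G) = homogeneousComponent t P := by rw [huv]
    rw [map_add, h1, h2] at h3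
    rw [h3, homogeneousComponent_of_mem hP, if_pos rfl]
  -- the syzygy map
  let g1 : (homogeneousSubmodule (Fin n) k w) →ₗ[k] (homogeneousSubmodule (Fin n) k (b + w)) :=
    LinearMap.codRestrict _ ((LinearMap.mulRight k G).comp (Submodule.subtype _)) (fun u => by
      rw [mem_homogeneousSubmodule]
      exact (show w + b = b + w by omega) ▸ (u.2.mul hG))
  let g2 : (homogeneousSubmodule (Fin n) k w) →ₗ[k] (homogeneousSubmodule (Fin n) k (a + w)) :=
    LinearMap.codRestrict _ ((LinearMap.mulRight k F).comp (Submodule.subtype _)) (fun u => by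
      rw [mem_homogeneousSubmodule]
      exact (show w + a = a + w by omega) ▸ (u.2.mul hF))
  let nu := LinearMap.prod g1 (-g2)
  have hinj : Function.Injective nu := by
    intro p q hpq
    have h1 : g1 p = g1 q := congrArg Prod.fst hpq
    have h2 : (p : MvPolynomial (Fin n) k) * G = (q : MvPolynomial (Fin n) k) * G :=
      Subtype.ext_iff.mp h1
    exact Subtype.ext (mul_right_cancel₀ hG0 h2)
  have hrange : LinearMap.range nu ≤ LinearMap.ker mu := by
    rintro _ ⟨p, rfl⟩
    rw [LinearMap.mem_ker]
    apply Subtype.ext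
    show (p : MvPolynomial (Fin n) k) * G * F + (-((p : MvPolynomial (Fin n) k) * F)) * G
        = (0 : MvPolynomial (Fin n) k)
    ring
  -- rank counting
  have hrk := LinearMap.finrank_range_add_finrank_ker mu
  have hr1 : Module.finrank k (LinearMap.range mu)
      = Module.finrank k (homogeneousSubmodule (Fin n) k t) := by
    rw [LinearMap.range_eq_top.mpr hsurj]
    exact finrank_top k _
  have hker : Module.finrank k (homogeneousSubmodule (Fin n) k w)
      ≤ Module.finrank k (LinearMap.ker mu) := by
    rw [← LinearMap.finrank_range_of_inj hinj]
    exact Submodule.finrank_mono hrange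
  have hprod : Module.finrank k ((homogeneousSubmodule (Fin n) k (b + w))
      × (homogeneousSubmodule (Fin n) k (a + w)))
      = Module.finrank k (homogeneousSubmodule (Fin n) k (b + w))
        + Module.finrank k (homogeneousSubmodule (Fin n) k (a + w)) :=
    Module.finrank_prod
  rw [hprod, hr1] at hrk
  -- numerics
  obtain ⟨v', hv'⟩ : ∃ v', n - 1 = v' + 2 := ⟨n - 3, by omega⟩
  have hC : ∀ s : ℕ, Module.finrank k (homogeneousSubmodule (Fin n) k s)
      = (s + (v' + 2)).choose (v' + 2) := by
    intro s
    rw [finrank_Rsub]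
    have h1 : n + s - 1 = s + (v' + 2) := by omega
    rw [h1]
    have h2 := Nat.choose_symm (show s ≤ s + (v' + 2) by omega)
    rw [show s + (v' + 2) - s = v' + 2 by omega] at h2
    exact h2.symm
  rw [hC, hC, hC] at hrk
  rw [hC] at hker
  have hineq := choose_ineq (v := v') a b w ha hb
  have hts' : t + (v' + 2) = a + b + w + (v' + 2) := by omega
  rw [hts'] at hrk
  omega

end CommonZero


lemma sum_single_c {n : ℕ} (i : Fin n) (c : ℕ) : (∑ j, Finsupp.single i c j) = c := by
  simp [Finsupp.single_apply]

lemma CH_ne_zero {k : Type*} [Field k] [CharZero k] {n m : ℕ} (hn : 1 ≤ n) :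
    completeHomogeneous k n m ≠ 0 := by
  intro h0
  have h1 := congrArg (eval (fun _ : Fin n => (1 : k))) h0
  rw [CH_eq, map_sum, map_zero] at h1
  have h2 : ∀ d ∈ T n m, eval (fun _ : Fin n => (1 : k)) (monomial d 1) = 1 := by
    intro d _
    rw [eval_monomial]
    simp [Finsupp.prod]
  rw [Finset.sum_congr rfl h2, Finset.sum_const, nsmul_eq_mul, mul_one] at h1
  have hne : (T n m).Nonempty := by
    refine ⟨Finsupp.single ⟨0, by omega⟩ m, mem_T.mpr ?_⟩
    exact sum_single_c _ _
  have hcard : (T n m).card ≠ 0 := Finset.card_ne_zero_of_mem hne.choose_spec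
  exact hcard (Nat.cast_eq_zero.mp h1)

end CHaux

open CHaux in
/-- Over an algebraically closed field of characteristic zero, the complete homogeneous
symmetric polynomial `h_m(X₁, …, X_{d+1})` is irreducible in `k[X₁, …, X_{d+1}]`, provided
`d + 1 ≥ 3` and `m ≥ 1`. -/
theorem completeHomogeneous_irreducible {k : Type*} [Field k] [IsAlgClosed k] [CharZero k]
    (d m : ℕ) (hd : 3 ≤ d + 1) (hm : 1 ≤ m) :
    Irreducible (completeHomogeneous k (d + 1) m) := by
  have hch := CH_isHomogeneous (k := k) (d + 1) m
  have hne : completeHomogeneous k (d + 1) m ≠ 0 := CH_ne_zero (by omega)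
  constructor
  · intro hu
    obtain ⟨v, huv⟩ := hu.exists_right_inv
    have hv : v ≠ 0 := by
      rintro rfl
      rw [mul_zero] at huv
      exact one_ne_zero huv.symm
    obtain ⟨a', b', hab, hpa, -⟩ :=
      isHomogeneous_of_mul hne hv (huv ▸ isHomogeneous_one (Fin (d+1)) k)
    have hm' : a' = m := hpa.inj_right hch hne
    omega
  · intro A B hAB
    by_contra hAB'
    push_neg at hAB'
    have hA0 : A ≠ 0 := by
      rintro rfl
      rw [zero_mul] at hAB
      exact hne hAB
    have hB0 : B ≠ 0 := by
      rintro rfl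
      rw [mul_zero] at hAB
      exact hne hAB
    obtain ⟨a, b, hab, hA, hB⟩ := isHomogeneous_of_mul hA0 hB0 (hAB ▸ hch)
    have ha1 : 1 ≤ a := by
      by_contra h
      have ha0 : a = 0 := by omega
      obtain ⟨c, rfl⟩ := eq_C_of_isHomogeneous_zero (ha0 ▸ hA)
      have hc : c ≠ 0 := fun h0 => hA0 (by rw [h0, map_zero])
      exact hAB'.1 (hc.isUnit.map (MvPolynomial.C (σ := Fin (d+1)) (R := k)))
    have hb1 : 1 ≤ b := by
      by_contra h
      have hb0 : b = 0 := by omega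
      obtain ⟨c, rfl⟩ := eq_C_of_isHomogeneous_zero (hb0 ▸ hB)
      have hc : c ≠ 0 := fun h0 => hB0 (by rw [h0, map_zero])
      exact hAB'.2 (hc.isUnit.map (MvPolynomial.C (σ := Fin (d+1)) (R := k)))
    obtain ⟨x, hx0, hxA, hxB⟩ := exists_common_zero hd hA hB ha1 hb1 hB0
    have hder : ∀ i, eval x (Pder k (d+1) i (m-1)) = 0 := by
      intro i
      have h1 : pderiv i (completeHomogeneous k (d+1) m) = Pder k (d+1) i (m-1) := by
        obtain ⟨r, rfl⟩ : ∃ r, m = r + 1 := ⟨m - 1, by omega⟩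
        rw [show r + 1 - 1 = r by omega]
        exact pderiv_CH i
      rw [← h1, hAB, pderiv_mul]
      rw [map_add, map_mul, map_mul]
      rw [hxA, hxB]
      ring
    have hzero : ∀ i, x i = 0 := smooth (m-1) x (fun i _ => hder i)
    exact hx0 (funext hzero)
end

section
/- Let $k$ be an algebraically closed field of characteristic zero and $d \ge 2$. Suppose $(T'+\alpha X_d)^{d-1}(T'+\beta X_d) = S(T',X_d,X_{d+1}) + a\,h_d(X_d,X_{d+1})$ in $k[T',X_d,X_{d+1}]$, where $S$ is symmetric under swapping $X_d \leftrightarrow X_{d+1}$, $h_d$ is the complete homogeneous symmetric polynomial of degree $d$ in two variables, and $a \in k$. If the left-hand side is independent of $X_{d+1}$ (as written) and the equation holds identically, then $\alpha = \beta = 0$. -/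
open MvPolynomial

/-- Let `k` be an algebraically closed field of characteristic zero and `d ≥ 2`. Working
in `k[T', X_d, X_{d+1}]` (variables indexed `0, 1, 2`): if
`(T' + αX_d)^{d-1}(T' + βX_d) - a·h_d(X_d, X_{d+1})` is symmetric under the swap
`X_d ↔ X_{d+1}`, then `α = β = 0`. -/
theorem swap_symmetric_forces_zero {k : Type*} [Field k] [IsAlgClosed k] [CharZero k]
    (d : ℕ) (hd : 2 ≤ d) (α β a : k)
    (hsym : rename (Equiv.swap (1 : Fin 3) 2)
        ((X 0 + C α * X 1) ^ (d - 1) * (X 0 + C β * X 1) -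
          C a * ∑ i ∈ Finset.range (d + 1), X 1 ^ i * X 2 ^ (d - i)) =
      (X 0 + C α * X 1) ^ (d - 1) * (X 0 + C β * X 1) -
        C a * ∑ i ∈ Finset.range (d + 1), X 1 ^ i * X 2 ^ (d - i)) :
    α = 0 ∧ β = 0 := by
  have hd1 : d - 1 ≠ 0 := by omega
  have hsum1 : ∑ i ∈ Finset.range (d + 1), (0:k) ^ i = 1 := by
    rw [Finset.sum_eq_single 0]
    · simp
    · intro i _ hi; simp [zero_pow hi]
    · simp
  have hsum2 : ∑ i ∈ Finset.range (d + 1), (0:k) ^ (d - i) = 1 := by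
    rw [Finset.sum_eq_single d]
    · simp
    · intro i hi hne
      rw [Finset.mem_range] at hi
      have : d - i ≠ 0 := by omega
      simp [zero_pow this]
    · simp
  have h1 := congrArg (eval (![(-α), 1, 0] : Fin 3 → k)) hsym
  have h2 := congrArg (eval (![(-β), 1, 0] : Fin 3 → k)) hsym
  simp [eval_rename, Function.comp, Equiv.swap_apply_def, hsum1, hsum2,
    zero_pow hd1] at h1 h2
  exact ⟨by tauto, by tauto⟩
end

section
/- Let $k$ be a field of characteristic zero, $d \ge 2$, and suppose $E(T,X_1,\dots,X_d) - f\,h_{d+1}(X_1,\dots,X_d) = \prod_{i=1}^{d}\bigl(T+m_1(X_1+\cdots+\widehat{X_i}+\cdots+X_d)+m_2X_i\bigr)\bigl(T+g(X_1+\cdots+X_d)\bigr)$, and that there is an identity, after setting $X_1=\cdots=X_{d-1}=0$ and substituting $T = T' + \gamma X_d$, of the form $(T'+(m_1+\gamma)X_d)^{d-1}(T'+(g+\gamma)X_d) = S(T',X_d,X_{d+1}) + a\,h_d(X_d,X_{d+1})$ with $S$ symmetric in $X_d,X_{d+1}$ and $a \in k$. Then $m_1 = g = -\gamma$. -/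
open MvPolynomial

/-- Let `k` be a field of characteristic zero and `d ≥ 2`.  Suppose
`E - f·h_{d+1}(X₁, …, X_d) = ∏ᵢ (T + m₁ ∑_{j≠i} Xⱼ + m₂Xᵢ) · (T + g(X₁+⋯+X_d))` in
`k[T, X₁, …, X_d]`, and that after setting `X₁ = ⋯ = X_{d-1} = 0` and `T = T' + γX_d`
there is an identity `(T' + (m₁+γ)X_d)^{d-1}(T' + (g+γ)X_d) = S + a·h_d(X_d, X_{d+1})`
with `S` symmetric in `X_d, X_{d+1}`.  Then `m₁ = g = -γ`. -/
theorem m1_eq_g_eq_neg_gamma {k : Type*} [Field k] [CharZero k]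
    (d : ℕ) (hd : 2 ≤ d) (m₁ m₂ g γ f a : k)
    (E : MvPolynomial (Unit ⊕ Fin d) k)
    (hE : E - C f * ∑ b ∈ Finset.Nat.antidiagonalTuple d (d + 1),
        ∏ j, X (Sum.inr j) ^ b j =
      (∏ i, (X (Sum.inl ()) + C m₁ * ∑ j ∈ Finset.univ \ {i}, X (Sum.inr j) +
          C m₂ * X (Sum.inr i))) *
        (X (Sum.inl ()) + C g * ∑ j, X (Sum.inr j)))
    (S : MvPolynomial (Fin 3) k)
    (hSsym : rename (Equiv.swap (1 : Fin 3) 2) S = S)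
    (hid : ((X 0 + C (m₁ + γ) * X 1) ^ (d - 1) * (X 0 + C (g + γ) * X 1) :
        MvPolynomial (Fin 3) k) =
      S + C a * ∑ i ∈ Finset.range (d + 1), X 1 ^ i * X 2 ^ (d - i)) :
    m₁ = -γ ∧ g = -γ := by
  set α := m₁ + γ with hα
  set β := g + γ with hβ
  have hswap0 : Equiv.swap (1 : Fin 3) 2 0 = 0 := by decide
  have hswap1 : Equiv.swap (1 : Fin 3) 2 1 = 2 := by decide
  have hswap2 : Equiv.swap (1 : Fin 3) 2 2 = 1 := by decide
  have h1 := congrArg (rename (Equiv.swap (1 : Fin 3) 2)) hid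
  simp only [map_mul, map_pow, map_add, rename_X, rename_C, map_sum,
    hswap0, hswap1, hswap2, hSsym] at h1
  have hsum : ∑ i ∈ Finset.range (d + 1),
      (X 2 : MvPolynomial (Fin 3) k) ^ i * X 1 ^ (d - i) =
      ∑ i ∈ Finset.range (d + 1), X 1 ^ i * X 2 ^ (d - i) := by
    rw [← Finset.sum_range_reflect]
    refine Finset.sum_congr rfl ?_
    intro i hi
    simp only [Finset.mem_range] at hi
    have h1' : d + 1 - 1 - i = d - i := by omega
    have h2' : d - (d - i) = i := by omega
    rw [h1', h2', mul_comm]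
  rw [hsum] at h1
  have heq := hid.trans h1.symm
  have h2 := congrArg (aeval (![1, Polynomial.X, 0] : Fin 3 → Polynomial k)) heq
  simp only [map_mul, map_pow, map_add, aeval_X, aeval_C, Matrix.cons_val_zero,
    Matrix.cons_val_one, Matrix.head_cons, Matrix.cons_val_two, Matrix.tail_cons,
    mul_zero, add_zero, one_pow, mul_one] at h2
  -- h2 : (1 + C α * X)^(d-1) * (1 + C β * X) = 1
  have hd1 : d - 1 ≠ 0 := by omega
  have hu1 : IsUnit ((1 + Polynomial.C α * Polynomial.X) ^ (d - 1)) :=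
    IsUnit.of_mul_eq_one _ h2
  have hu1' : IsUnit (1 + Polynomial.C α * Polynomial.X) :=
    (isUnit_pow_iff hd1).mp hu1
  rw [mul_comm] at h2
  have hu2 : IsUnit (1 + Polynomial.C β * Polynomial.X) :=
    IsUnit.of_mul_eq_one _ h2
  have key : ∀ c : k, IsUnit (1 + Polynomial.C c * Polynomial.X) → c = 0 := by
    intro c hc
    obtain ⟨r, -, hr⟩ := Polynomial.isUnit_iff.mp hc
    have := congrArg (fun p => Polynomial.coeff p 1) hr
    simpa [Polynomial.coeff_one] using this.symm
  have hα0 := key α hu1'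
  have hβ0 := key β hu2
  rw [hα] at hα0
  rw [hβ] at hβ0
  exact ⟨by linear_combination hα0, by linear_combination hβ0⟩
end
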